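/- Let H ≤ F_n be finitely generated and g ∈ F_n. Then g depends on H (i.e. ker φ_g ≠ 1) if and only if rank⟨H, g⟩ ≤ rank H. -/

import Mathlib

set_option maxHeartbeats 1000000
set_option linter.unusedSectionVars false

open Monoid
open scoped Monoid.Coprod

/-- The generator `x` of the infinite cyclic group `⟨x⟩ = Multiplicative ℤ`. -/
def xgen : Multiplicative ℤ := Multiplicative.ofAdd 1

/-- An alternating expression `h₀ · x^{β₁} c₁ · x^{β₂} c₂ ⋯ x^{β_m} c_m` in `H ∗ ⟨x⟩`,
recorded by the head coefficient `h₀` and the list `l = [(β₁,c₁),…,(β_m,c_m)]`. -/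
def coprodExpr {H : Type*} [Group H] (h₀ : H) (l : List (ℤ × H)) : H ∗ Multiplicative ℤ :=
  Coprod.inl h₀ * (l.map fun p => Coprod.inr (xgen ^ p.1) * Coprod.inl p.2).prod

/-- The degree of an equation `w ∈ H ∗ ⟨x⟩`: the number of occurrences of `x` and `x⁻¹`
in the cyclic reduction of `w`.  Equivalently (and this is how we formalize it), it is the
minimum, over all elements conjugate to `w` and over all ways of writing such a conjugate as
an alternating expression `h₀ x^{β₁} c₁ ⋯ x^{β_m} c_m`, of the total number `∑ᵢ |βᵢ|` of
occurrences of `x^{±1}`; this minimum is achieved exactly by the cyclic reduction of `w`. -/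
noncomputable def degree {H : Type*} [Group H] (w : H ∗ Multiplicative ℤ) : ℕ :=
  sInf { n | ∃ (c : H ∗ Multiplicative ℤ) (h₀ : H) (l : List (ℤ × H)),
      c * w * c⁻¹ = coprodExpr h₀ l ∧ (l.map fun p => p.1.natAbs).sum = n }

open Function


/-- The abelianization map to `Multiplicative (β →₀ ℤ)` from a free group, and its surjectivity. -/
private noncomputable def abMap (β : Type) : FreeGroup β →* Multiplicative (β →₀ ℤ) :=
  FreeGroup.lift fun b => Multiplicative.ofAdd (Finsupp.single b (1 : ℤ))

private lemma abMap_surjective (β : Type) : Surjective (abMap β) := by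
  intro f
  induction f using Finsupp.induction_linear with
  | zero => exact ⟨1, map_one _⟩
  | add f g hf hg =>
    obtain ⟨w, hw⟩ := hf; obtain ⟨v, hv⟩ := hg
    exact ⟨w * v, by rw [map_mul, hw, hv]; rfl⟩
  | single a b =>
    refine ⟨FreeGroup.of a ^ b, ?_⟩
    have h1 : (abMap β) (FreeGroup.of a) = Multiplicative.ofAdd (Finsupp.single a (1 : ℤ)) :=
      FreeGroup.lift_apply_of
    rw [map_zpow, h1, ← ofAdd_zsmul, Finsupp.smul_single, smul_eq_mul, mul_one]
    rfl

private lemma span_of_closure {β : Type} (s : Set (Multiplicative (β →₀ ℤ)))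
    (h2 : Subgroup.closure s = ⊤) :
    Submodule.span ℤ (Multiplicative.toAdd '' s) = ⊤ := by
  rw [eq_top_iff]
  intro x _
  have hx : Multiplicative.ofAdd x ∈ Subgroup.closure s := h2 ▸ Subgroup.mem_top _
  refine Subgroup.closure_induction
    (p := fun y _ => Multiplicative.toAdd y ∈ Submodule.span ℤ (Multiplicative.toAdd '' s))
    ?_ ?_ ?_ ?_ hx
  · intro y hy; exact Submodule.subset_span ⟨y, hy, rfl⟩
  · exact Submodule.zero_mem _
  · intro y z _ _ hy hz; exact Submodule.add_mem _ hy hz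
  · intro y _ hy; exact Submodule.neg_mem _ hy

private lemma mk_le_of_closure {β : Type} (S : Finset (FreeGroup β))
    (hS : Subgroup.closure (S : Set (FreeGroup β)) = ⊤) : Cardinal.mk β ≤ S.card := by
  classical
  have h2 : Subgroup.closure (abMap β '' S) = ⊤ := by
    rw [← MonoidHom.map_closure, hS, ← MonoidHom.range_eq_map]
    exact MonoidHom.range_eq_top.2 (abMap_surjective β)
  have h4 : Submodule.span ℤ (Multiplicative.toAdd '' (abMap β '' (S : Set (FreeGroup β)))) = ⊤ :=
    span_of_closure _ h2
  have h5 : Module.rank ℤ (β →₀ ℤ) ≤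
      Cardinal.mk (Multiplicative.toAdd '' (abMap β '' (S : Set (FreeGroup β)))) := by
    rw [← rank_top ℤ, ← h4]
    exact rank_span_le _
  rw [rank_finsupp_self'] at h5
  refine h5.trans (le_trans (Cardinal.mk_image_le) (le_trans Cardinal.mk_image_le ?_))
  exact (Cardinal.mk_coe_finset (s := S)).le

private lemma finite_of_fg_freeGroup {β : Type} (h : Group.FG (FreeGroup β)) : Finite β := by
  obtain ⟨S, -, hS⟩ := @Group.rank_spec (FreeGroup β) _ h
  have := mk_le_of_closure S hS
  rw [← Cardinal.lt_aleph0_iff_finite]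
  exact this.trans_lt (Cardinal.nat_lt_aleph0 _)

instance freeGroup_fg {β : Type} [Finite β] : Group.FG (FreeGroup β) := by
  classical
  haveI := Fintype.ofFinite β
  rw [Group.fg_iff]
  exact ⟨Set.range FreeGroup.of, FreeGroup.closure_range_of β, Set.finite_range _⟩

private lemma rank_freeGroup_fin (m : ℕ) : Group.rank (FreeGroup (Fin m)) = m := by
  classical
  apply le_antisymm
  · have h : Subgroup.closure ((Finset.univ.image (FreeGroup.of (α := Fin m)) : Finset _) :
        Set (FreeGroup (Fin m))) = ⊤ := by
      rw [Finset.coe_image, Finset.coe_univ, Set.image_univ]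
      exact FreeGroup.closure_range_of _
    exact (Group.rank_le h).trans ((Finset.card_image_le).trans (by simp))
  · obtain ⟨S, hcard, hS⟩ := Group.rank_spec (FreeGroup (Fin m))
    have := mk_le_of_closure S hS
    rw [Cardinal.mk_fin] at this
    exact_mod_cast hcard ▸ (by exact_mod_cast this : m ≤ S.card)

private lemma exists_iso_freeGroup (G : Type) [Group G] [IsFreeGroup G] [Group.FG G] :
    Nonempty (G ≃* FreeGroup (Fin (Group.rank G))) := by
  classical
  let e0 : G ≃* FreeGroup (IsFreeGroup.Generators G) := IsFreeGroup.toFreeGroup G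
  haveI : Group.FG (FreeGroup (IsFreeGroup.Generators G)) :=
    Group.fg_of_surjective (f := e0.toMonoidHom) e0.surjective
  haveI : Finite (IsFreeGroup.Generators G) := finite_of_fg_freeGroup ‹_›
  haveI := Fintype.ofFinite (IsFreeGroup.Generators G)
  let e1 := Fintype.equivFin (IsFreeGroup.Generators G)
  let e : G ≃* FreeGroup (Fin (Fintype.card (IsFreeGroup.Generators G))) :=
    e0.trans (FreeGroup.freeGroupCongr e1)
  have hr : Group.rank G = Fintype.card (IsFreeGroup.Generators G) := by
    rw [Group.rank_congr e, rank_freeGroup_fin]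
  exact ⟨e.trans (FreeGroup.freeGroupCongr (finCongr hr.symm))⟩


/-- `Multiplicative ℤ` is the free group on one generator. -/
private noncomputable def multIntEquivFreeGroup : Multiplicative ℤ ≃* FreeGroup Unit := by
  refine MonoidHom.toMulEquiv (zpowersHom (FreeGroup Unit) (FreeGroup.of ()))
    (FreeGroup.lift fun _ => Multiplicative.ofAdd (1 : ℤ)) ?_ ?_
  · refine MonoidHom.ext_mint ?_
    simp [zpowersHom_apply]
  · ext ⟨⟩
    simp [zpowersHom_apply]


private noncomputable def coprodEquivFreeGroup {G G' : Type} [Group G] [Group G'] {ι κ : Type}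
    (e : G ≃* FreeGroup ι) (e' : G' ≃* FreeGroup κ) : G ∗ G' ≃* FreeGroup (ι ⊕ κ) := by
  let F : G ∗ G' →* FreeGroup (ι ⊕ κ) :=
    Coprod.lift ((FreeGroup.map Sum.inl).comp e.toMonoidHom)
      ((FreeGroup.map Sum.inr).comp e'.toMonoidHom)
  let B : FreeGroup (ι ⊕ κ) →* G ∗ G' :=
    FreeGroup.lift (Sum.elim
      (fun i => Coprod.inl (e.symm (FreeGroup.of i)))
      (fun k => Coprod.inr (e'.symm (FreeGroup.of k))))
  have hBl : B.comp (FreeGroup.map Sum.inl) = Coprod.inl.comp e.symm.toMonoidHom := by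
    apply FreeGroup.ext_hom; intro i; simp [B]
  have hBr : B.comp (FreeGroup.map Sum.inr) = Coprod.inr.comp e'.symm.toMonoidHom := by
    apply FreeGroup.ext_hom; intro k; simp [B]
  refine MonoidHom.toMulEquiv F B ?_ ?_
  · apply Coprod.hom_ext
    · ext x
      change B ((FreeGroup.map Sum.inl) (e x)) = Coprod.inl x
      rw [← MonoidHom.comp_apply, hBl]; simp
    · ext x
      change B ((FreeGroup.map Sum.inr) (e' x)) = Coprod.inr x
      rw [← MonoidHom.comp_apply, hBr]; simp
  · ext (i | k) <;> simp [F, B]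

open Function

namespace StmtResid

variable {β : Type} [DecidableEq β]

private lemma no_cancel {l : List (β × Bool)} (hl : FreeGroup.reduce l = l) :
    ∀ (k : ℕ) (a : β) (b : Bool), l[k]? = some (a, b) → l[k + 1]? = some (a, !b) → False := by
  intro k a b h1 h2
  obtain ⟨hk1, e1⟩ := List.getElem?_eq_some_iff.1 h1
  obtain ⟨hk2, e2⟩ := List.getElem?_eq_some_iff.1 h2
  have hdecomp : l = l.take k ++ (a, b) :: (a, !b) :: l.drop (k + 2) := by
    conv_lhs => rw [← List.take_append_drop k l]
    congr 1
    rw [List.drop_eq_getElem_cons (by omega : k < l.length), e1]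
    congr 1
    rw [List.drop_eq_getElem_cons hk2, e2]
  have hstep : FreeGroup.Red.Step l (l.take k ++ l.drop (k + 2)) := by
    nth_rewrite 1 [hdecomp]
    exact FreeGroup.Red.Step.not
  have hmin := FreeGroup.reduce.min (L₁ := l) (hl.symm ▸ hstep.to_red)
  rw [hl] at hmin
  have hlen := congrArg List.length hmin
  simp only [List.length_append, List.length_take, List.length_drop] at hlen
  omega

section Sigma

variable (l : List (β × Bool)) (a : β)

/-- position `k` carries letter `a⁻¹`, so the permutation for `a` should move `k ↦ k+1`. -/
private def A (k : ℕ) : Prop := l[k]? = some (a, false)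

/-- position `k-1` carries letter `a`, so the permutation for `a` should move `k ↦ k-1`. -/
private def B (k : ℕ) : Prop := k ≠ 0 ∧ l[k - 1]? = some (a, true)

private def A' (k : ℕ) : Prop := k ≠ 0 ∧ l[k - 1]? = some (a, false)

private def B' (k : ℕ) : Prop := l[k]? = some (a, true)

variable {l a}

private lemma lt_of_A {k : ℕ} (h : A l a k) : k < l.length :=
  (List.getElem?_eq_some_iff.1 h).1

private lemma lt_of_B' {k : ℕ} (h : B' l a k) : k < l.length :=
  (List.getElem?_eq_some_iff.1 h).1

private lemma lt_of_B {k : ℕ} (h : B l a k) : k - 1 < l.length :=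
  (List.getElem?_eq_some_iff.1 h.2).1

private lemma lt_of_A' {k : ℕ} (h : A' l a k) : k - 1 < l.length :=
  (List.getElem?_eq_some_iff.1 h.2).1

variable (hred : ∀ (k : ℕ) (a : β) (b : Bool),
    l[k]? = some (a, b) → l[k + 1]? = some (a, !b) → False)

include hred

private lemma not_A_and_B {k : ℕ} (hA : A l a k) (hB : B l a k) : False := by
  refine hred (k - 1) a true hB.2 ?_
  have hk := hB.1
  have : k - 1 + 1 = k := by omega
  rw [this]
  exact hA

private lemma not_A'_and_B' {k : ℕ} (hA : A' l a k) (hB : B' l a k) : False := by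
  refine hred (k - 1) a false hA.2 ?_
  have hk := hA.1
  have : k - 1 + 1 = k := by omega
  rw [this]
  exact hB

end Sigma

section Perm

open scoped Classical

variable (l : List (β × Bool))

private noncomputable def fwd (a : β) (i : Fin (l.length + 1)) : Fin (l.length + 1) :=
  if h : A l a i.val then ⟨i.val + 1, by have := lt_of_A h; omega⟩
  else ⟨i.val - 1, by omega⟩

private noncomputable def bwd (a : β) (i : Fin (l.length + 1)) : Fin (l.length + 1) :=
  if h : A' l a i.val then ⟨i.val - 1, by omega⟩
  else ⟨min (i.val + 1) l.length, by omega⟩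

private lemma fwd_val (a : β) (i : Fin (l.length + 1)) :
    (fwd l a i).val = if A l a i.val then i.val + 1 else i.val - 1 := by
  rw [fwd]
  split <;> simp_all

private lemma bwd_val (a : β) (i : Fin (l.length + 1)) :
    (bwd l a i).val = if A' l a i.val then i.val - 1 else min (i.val + 1) l.length := by
  rw [bwd]
  split <;> simp_all

variable {l}
variable (hred : ∀ (k : ℕ) (a : β) (b : Bool),
    l[k]? = some (a, b) → l[k + 1]? = some (a, !b) → False)

include hred

private lemma core1 {a : β} {i : Fin (l.length + 1)} (h : A l a i.val ∨ B l a i.val) :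
    (A' l a (fwd l a i).val ∨ B' l a (fwd l a i).val) ∧ bwd l a (fwd l a i) = i := by
  rcases h with hA | hB
  · have h1 : (fwd l a i).val = i.val + 1 := by rw [fwd_val, if_pos hA]
    have hA' : A' l a (i.val + 1) := ⟨by omega, by simpa [A] using hA⟩
    rw [h1]
    refine ⟨Or.inl hA', ?_⟩
    refine Fin.ext ?_
    rw [bwd_val, h1, if_pos hA']
    omega
  · have hnA : ¬ A l a i.val := fun hA => not_A_and_B hred hA hB
    have hk0 : i.val ≠ 0 := hB.1
    have hlt : i.val - 1 < l.length := lt_of_B hB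
    have h1 : (fwd l a i).val = i.val - 1 := by rw [fwd_val, if_neg hnA]
    have hB' : B' l a (i.val - 1) := hB.2
    rw [h1]
    refine ⟨Or.inr hB', ?_⟩
    have hnA' : ¬ A' l a (i.val - 1) := fun hA' => not_A'_and_B' hred hA' hB'
    refine Fin.ext ?_
    rw [bwd_val, h1, if_neg hnA']
    omega

private lemma core2 {a : β} {j : Fin (l.length + 1)} (h : A' l a j.val ∨ B' l a j.val) :
    (A l a (bwd l a j).val ∨ B l a (bwd l a j).val) ∧ fwd l a (bwd l a j) = j := by
  rcases h with hA' | hB'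
  · have hk0 : j.val ≠ 0 := hA'.1
    have h1 : (bwd l a j).val = j.val - 1 := by rw [bwd_val, if_pos hA']
    have hA : A l a (j.val - 1) := hA'.2
    rw [h1]
    refine ⟨Or.inl hA, ?_⟩
    refine Fin.ext ?_
    rw [fwd_val, h1, if_pos hA]
    omega
  · have hnA' : ¬ A' l a j.val := fun hA' => not_A'_and_B' hred hA' hB'
    have hlt : j.val < l.length := lt_of_B' hB'
    have h1 : (bwd l a j).val = j.val + 1 := by rw [bwd_val, if_neg hnA']; omega
    have hB : B l a (j.val + 1) := ⟨by omega, by simpa [B'] using hB'⟩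
    have hnA : ¬ A l a (j.val + 1) := by
      intro hA
      exact hred j.val a true hB' (by simpa [A] using hA)
    rw [h1]
    refine ⟨Or.inr hB, ?_⟩
    refine Fin.ext ?_
    rw [fwd_val, h1, if_neg hnA]
    omega

/-- The permutation associated to the generator `a`: the completion of the partial injection
given by `fwd` on `A ∨ B` to a permutation of two copies of `Fin (l.length + 1)`. -/
private noncomputable def sigma (a : β) :
    Equiv.Perm (Fin (l.length + 1) ⊕ Fin (l.length + 1)) where
  toFun x := match x with
    | .inl i => if A l a i.val ∨ B l a i.val then .inl (fwd l a i) else .inr i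
    | .inr i => if A' l a i.val ∨ B' l a i.val then .inr (bwd l a i) else .inl i
  invFun x := match x with
    | .inl j => if A' l a j.val ∨ B' l a j.val then .inl (bwd l a j) else .inr j
    | .inr j => if A l a j.val ∨ B l a j.val then .inr (fwd l a j) else .inl j
  left_inv := by
    rintro (i | i)
    · by_cases h : A l a i.val ∨ B l a i.val
      · simp only [if_pos h, if_pos (core1 hred h).1, (core1 hred h).2]
      · simp only [if_neg h, if_neg h]
    · by_cases h : A' l a i.val ∨ B' l a i.val
      · simp only [if_pos h, if_pos (core2 hred h).1, (core2 hred h).2]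
      · simp only [if_neg h, if_neg h]
  right_inv := by
    rintro (j | j)
    · by_cases h : A' l a j.val ∨ B' l a j.val
      · simp only [if_pos h, if_pos (core2 hred h).1, (core2 hred h).2]
      · simp only [if_neg h, if_neg h]
    · by_cases h : A l a j.val ∨ B l a j.val
      · simp only [if_pos h, if_pos (core1 hred h).1, (core1 hred h).2]
      · simp only [if_neg h, if_neg h]

private lemma sigma_stepA {a : β} {k : ℕ} (hk : k < l.length) (h : l[k]? = some (a, false)) :
    sigma hred a (.inl ⟨k, by omega⟩) = .inl ⟨k + 1, by omega⟩ := by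
  have hA : A l a k := h
  show (if A l a k ∨ B l a k then _ else _) = _
  rw [if_pos (Or.inl hA)]
  congr 1
  refine Fin.ext ?_
  rw [fwd_val, if_pos hA]

private lemma sigma_stepB {a : β} {k : ℕ} (hk : k < l.length) (h : l[k]? = some (a, true)) :
    sigma hred a (.inl ⟨k + 1, by omega⟩) = .inl ⟨k, by omega⟩ := by
  have hB : B l a (k + 1) := ⟨by omega, by simpa using h⟩
  have hnA : ¬ A l a (k + 1) := fun hA => hred k a true h (by simpa [A] using hA)
  show (if A l a (k + 1) ∨ B l a (k + 1) then _ else _) = _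
  rw [if_pos (Or.inr hB)]
  congr 1
  refine Fin.ext ?_
  rw [fwd_val, if_neg hnA]
  simp

private noncomputable def pihom :
    FreeGroup β →* Equiv.Perm (Fin (l.length + 1) ⊕ Fin (l.length + 1)) :=
  FreeGroup.lift fun a => sigma hred a

private lemma traj : ∀ (d k : ℕ) (hk : k ≤ l.length) (_ : l.length - k = d),
    (pihom hred) (FreeGroup.mk (l.drop k)) (.inl ⟨l.length, by omega⟩) =
      .inl ⟨k, by omega⟩ := by
  intro d
  induction d with
  | zero =>
    intro k hk hd
    have hkn : k = l.length := by omega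
    subst hkn
    rw [List.drop_length]
    rw [show FreeGroup.mk ([] : List (β × Bool)) = 1 from rfl, map_one]
    rfl
  | succ d ih =>
    intro k hk hd
    have hklt : k < l.length := by omega
    rw [List.drop_eq_getElem_cons hklt]
    have hsplit : FreeGroup.mk (l[k] :: l.drop (k + 1)) =
        FreeGroup.mk [l[k]] * FreeGroup.mk (l.drop (k + 1)) := by
      rw [FreeGroup.mul_mk]; rfl
    rw [hsplit, map_mul, Equiv.Perm.mul_apply, ih (k + 1) (by omega) (by omega)]
    rcases hp : l[k] with ⟨a, b⟩
    have hsome : l[k]? = some (a, b) := List.getElem?_eq_some_iff.2 ⟨hklt, hp⟩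
    cases b with
    | true =>
      rw [show FreeGroup.mk [(a, true)] = FreeGroup.of a from rfl]
      rw [show (pihom hred) (FreeGroup.of a) = sigma hred a from FreeGroup.lift_apply_of]
      exact sigma_stepB hred hklt hsome
    | false =>
      rw [show FreeGroup.mk [(a, false)] = (FreeGroup.of a)⁻¹ from rfl]
      rw [map_inv]
      rw [show (pihom hred) (FreeGroup.of a) = sigma hred a from FreeGroup.lift_apply_of]
      rw [← sigma_stepA hred hklt hsome]
      exact Equiv.symm_apply_apply _ _

end Perm

private lemma exists_finite_quotient (w : FreeGroup β) (hw : w ≠ 1) :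
    ∃ (Q : Type) (_ : Group Q) (_ : Finite Q) (π : FreeGroup β →* Q), π w ≠ 1 := by
  have hl : FreeGroup.reduce w.toWord = w.toWord := FreeGroup.reduce_toWord w
  have hred := no_cancel hl
  have hne : w.toWord ≠ [] := fun h => hw (FreeGroup.toWord_eq_nil_iff.1 h)
  have hn : 0 < w.toWord.length := List.length_pos_iff.2 hne
  refine ⟨Equiv.Perm (Fin (w.toWord.length + 1) ⊕ Fin (w.toWord.length + 1)),
    inferInstance, inferInstance, pihom hred, ?_⟩
  intro h1
  have htr := traj hred w.toWord.length 0 (by omega) (by omega)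
  rw [List.drop_zero, FreeGroup.mk_toWord, h1] at htr
  rw [Equiv.Perm.one_apply] at htr
  have h2 : w.toWord.length = 0 := by
    have h3 := Sum.inl.inj htr
    simpa using congrArg Fin.val h3
  omega

end StmtResid

private lemma hopf {m : ℕ} (f : FreeGroup (Fin m) →* FreeGroup (Fin m))
    (hf : Surjective f) : Injective f := by
  refine (injective_iff_map_eq_one f).2 ?_
  intro x hx
  by_contra hx1
  obtain ⟨Q, _, _, π, hπ⟩ := StmtResid.exists_finite_quotient x hx1
  haveI : Finite (FreeGroup (Fin m) →* Q) :=
    Finite.of_injective (fun h => (h ∘ FreeGroup.of : Fin m → Q))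
      (fun h1 h2 he => FreeGroup.ext_hom _ _ (congrFun he))
  have hTinj : Injective (fun h : FreeGroup (Fin m) →* Q => h.comp f) :=
    fun h1 h2 he => (MonoidHom.cancel_right hf).1 he
  obtain ⟨ψ, hψ⟩ := Finite.injective_iff_surjective.1 hTinj π
  apply hπ
  have hψ' : ψ.comp f = π := hψ
  calc π x = (ψ.comp f) x := by rw [hψ']
    _ = ψ (f x) := rfl
    _ = 1 := by rw [hx, map_one]

/-- for a finitely generated subgroup `H ≤ F_n` and `g ∈ F_n`, the element
`g` depends on `H` (i.e. `ker φ_g ≠ 1`) iff `rank ⟨H, g⟩ ≤ rank H`. -/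
theorem stmt16 {n : ℕ} (H : Subgroup (FreeGroup (Fin n))) (g : FreeGroup (Fin n))
    [Group.FG ↥H] [Group.FG ↥(H ⊔ Subgroup.zpowers g)]
    (φ : ↥H ∗ Multiplicative ℤ →* FreeGroup (Fin n))
    (hφ : φ = Coprod.lift H.subtype (zpowersHom (FreeGroup (Fin n)) g)) :
    φ.ker ≠ ⊥ ↔ Group.rank ↥(H ⊔ Subgroup.zpowers g) ≤ Group.rank ↥H := by
  classical
  haveI : Group.FG (FreeGroup (Fin (Group.rank ↥H + 1))) := freeGroup_fg
  haveI : Group.FG (FreeGroup (Fin (Group.rank ↥(H ⊔ Subgroup.zpowers g)))) := freeGroup_fg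
  have hrange : φ.range = H ⊔ Subgroup.zpowers g := by
    rw [hφ, Coprod.range_lift, Subgroup.range_subtype, Subgroup.range_zpowersHom]
  obtain ⟨eH⟩ := exists_iso_freeGroup ↥H
  obtain ⟨eK⟩ := exists_iso_freeGroup ↥(H ⊔ Subgroup.zpowers g)
  let e : ↥H ∗ Multiplicative ℤ ≃* FreeGroup (Fin (Group.rank ↥H + 1)) :=
    (coprodEquivFreeGroup eH multIntEquivFreeGroup).trans
      (FreeGroup.freeGroupCongr
        (((Equiv.refl (Fin (Group.rank ↥H))).sumCongr
          (Equiv.ofUnique Unit (Fin 1))).trans finSumFinEquiv))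
  let φ' : ↥H ∗ Multiplicative ℤ →* ↥(H ⊔ Subgroup.zpowers g) :=
    φ.codRestrict _ (fun x => by
      rw [← hrange]; exact ⟨x, rfl⟩)
  have hφ'surj : Surjective φ' := by
    rintro ⟨y, hy⟩
    rw [← hrange] at hy
    obtain ⟨x, hx⟩ := hy
    exact ⟨x, Subtype.ext hx⟩
  have hker' : φ'.ker = φ.ker := by
    ext x
    simp only [MonoidHom.mem_ker]
    rw [Subtype.ext_iff]
    rfl
  let ψ : FreeGroup (Fin (Group.rank ↥H + 1)) →* ↥(H ⊔ Subgroup.zpowers g) :=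
    φ'.comp e.symm.toMonoidHom
  have hψsurj : Surjective ψ := hφ'surj.comp e.symm.surjective
  have hψφ' : ∀ x, ψ (e x) = φ' x := fun x => by
    simp only [ψ, MonoidHom.comp_apply, MulEquiv.coe_toMonoidHom, MulEquiv.symm_apply_apply]
  have hb_le : Group.rank ↥(H ⊔ Subgroup.zpowers g) ≤ Group.rank ↥H + 1 := by
    have := Group.rank_le_of_surjective ψ hψsurj
    rwa [rank_freeGroup_fin] at this
  constructor
  · intro hker
    by_contra hcon
    push_neg at hcon
    have hb : Group.rank ↥(H ⊔ Subgroup.zpowers g) = Group.rank ↥H + 1 := by omega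
    let θ : FreeGroup (Fin (Group.rank ↥H + 1)) →* FreeGroup (Fin (Group.rank ↥H + 1)) :=
      ((FreeGroup.freeGroupCongr (finCongr hb)).toMonoidHom.comp eK.toMonoidHom).comp ψ
    have hθ : Surjective θ :=
      ((FreeGroup.freeGroupCongr (finCongr hb)).surjective.comp eK.surjective).comp hψsurj
    have hθinj := hopf θ hθ
    have hψinj : Injective ψ := fun x y hxy => hθinj (by
      simp only [θ, MonoidHom.comp_apply, hxy])
    have hφ'inj : Injective φ' := fun x y hxy => e.injective (hψinj (by
      rw [hψφ', hψφ', hxy]))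
    exact hker (by rw [← hker', MonoidHom.ker_eq_bot_iff]; exact hφ'inj)
  · intro hle h
    have hφ'inj : Injective φ' := by
      rw [← MonoidHom.ker_eq_bot_iff, hker']
      exact h
    have hrk : Group.rank ↥(H ⊔ Subgroup.zpowers g) = Group.rank ↥H + 1 := by
      have hiso := Group.rank_congr
        ((MulEquiv.ofBijective φ' ⟨hφ'inj, hφ'surj⟩).symm.trans e)
      rwa [rank_freeGroup_fin] at hiso
    omega
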